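/- Suppose the channel-rate vector has independent coordinates, i.e., p(r) = Π_{k=1}^K ℙ(R_k = r_k) for independent ℛ-valued random variables R_1,…,R_K, and suppose user i's channel stochastically dominates user j's channel: ℙ(R_i > a) ≥ ℙ(R_j > a) for all a ∈ ℝ. Then for every x ∈ 𝒳 with x_i = 0, the vector x′ obtained by swapping coordinates i and j (x′_i = x_j, x′_j = 0, and x′_m = x_m for m ∉ {i,j}) also belongs to 𝒳. -/

import Mathlib

open Finset

/-- The feasible throughput set of the wireless downlink with `K` users and
finite rate set `R ⊆ [0,∞)`: channel-rate vectors are `r : Fin K → ↥R` with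
probability `p r`; in each state at most one user is scheduled (idling allowed). -/
def FeasibleSet (K : ℕ) (R : Finset ℝ) (p : (Fin K → ↥R) → ℝ) :
    Set (Fin K → ℝ) :=
  {x | ∃ φ : Fin K → (Fin K → ↥R) → ℝ,
    (∀ k r, φ k r ∈ Set.Icc (0 : ℝ) 1) ∧
    (∀ r, ∑ k, φ k r ≤ 1) ∧
    (∀ k, x k = ∑ r, φ k r * p r * (r k : ℝ))}


lemma clamp_eq (x y u v : ℝ) (hyx : y ≤ x) (huv : u ≤ v) :
    max 0 (min x v - max y u) = min x (max y v) - min x (max y u) := by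
  rcases le_total v y with h1 | h1 <;> rcases le_total x u with h2 | h2 <;>
    rcases le_total x v with h3 | h3 <;> rcases le_total y u with h4 | h4 <;>
    simp [max_def, min_def] <;> split_ifs <;> linarith

lemma telescope (n : ℕ) (x y : ℝ) (N : ℕ → ℝ) (hN : Monotone N)
    (hN0 : N 0 = 0) (hN1 : N n = 1) (hyx : y ≤ x) (h0y : 0 ≤ y) (hx1 : x ≤ 1) :
    ∑ α : Fin n, max 0 (min x (N (α.val + 1)) - max y (N α.val)) = x - y := by
  have step : ∀ α : Fin n, max 0 (min x (N (α.val + 1)) - max y (N α.val)) =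
      (fun t => min x (max y (N t))) (α.val + 1) - (fun t => min x (max y (N t))) α.val := by
    intro α
    exact clamp_eq x y (N α.val) (N (α.val + 1)) hyx (hN (Nat.le_succ _))
  rw [Finset.sum_congr rfl (fun α _ => step α)]
  rw [Fin.sum_univ_eq_sum_range (fun t => (fun t => min x (max y (N t))) (t + 1) -
      (fun t => min x (max y (N t))) t) n]
  rw [Finset.sum_range_sub (fun t => min x (max y (N t))) n]
  rw [hN0, hN1]
  rw [max_eq_right (hyx.trans hx1), min_eq_left hx1, max_eq_left h0y, min_eq_right hyx]

lemma exists_coupling (R : Finset ℝ) (μ ν : ↥R → ℝ)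
    (hμ0 : ∀ v, 0 ≤ μ v) (hν0 : ∀ v, 0 ≤ ν v)
    (hμ1 : ∑ v, μ v = 1) (hν1 : ∑ v, ν v = 1)
    (hdom : ∀ a : ℝ, ∑ v ∈ Finset.univ.filter (fun v : ↥R => a < (v : ℝ)), μ v ≤
      ∑ v ∈ Finset.univ.filter (fun v : ↥R => a < (v : ℝ)), ν v) :
    ∃ π : ↥R → ↥R → ℝ, (∀ b a, 0 ≤ π b a) ∧ (∀ b, ∑ a, π b a = μ b) ∧
      (∀ a, ∑ b, π b a = ν a) ∧ (∀ b a : ↥R, (a : ℝ) < (b : ℝ) → π b a = 0) := by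
  classical
  set n := R.card with hn
  set σ : Fin n ≃o ↥R := R.orderIsoOfFin rfl with hσ
  set M : (↥R → ℝ) → ℕ → ℝ :=
    fun f t => ∑ s ∈ Finset.univ.filter (fun s : Fin n => s.val < t), f (σ s) with hM
  have M0 : ∀ f, M f 0 = 0 := by intro f; simp [hM]
  have Msum : ∀ f : ↥R → ℝ, ∑ s : Fin n, f (σ s) = ∑ v, f v :=
    fun f => Equiv.sum_comp σ.toEquiv f
  have Mtop : ∀ (f : ↥R → ℝ) t, n ≤ t → M f t = ∑ v, f v := by
    intro f t ht
    rw [hM]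
    simp only
    rw [Finset.filter_true_of_mem (fun s _ => lt_of_lt_of_le s.isLt ht)]
    exact Msum f
  have Mmono : ∀ f : ↥R → ℝ, (∀ v, 0 ≤ f v) → Monotone (M f) := by
    intro f hf t t' htt'
    apply Finset.sum_le_sum_of_subset_of_nonneg
    · intro s hs
      simp only [Finset.mem_filter, Finset.mem_univ, true_and] at hs ⊢
      omega
    · intro s _ _; exact hf _
  have Mstep : ∀ (f : ↥R → ℝ) (s : Fin n), M f (s.val + 1) = M f s.val + f (σ s) := by
    intro f s
    have hins : Finset.univ.filter (fun u : Fin n => u.val < s.val + 1) =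
        insert s (Finset.univ.filter (fun u : Fin n => u.val < s.val)) := by
      ext u
      simp only [Finset.mem_filter, Finset.mem_univ, true_and, Finset.mem_insert]
      constructor
      · intro h
        rcases Nat.lt_succ_iff_lt_or_eq.mp h with h | h
        · exact Or.inr h
        · exact Or.inl (Fin.ext h)
      · rintro (rfl | h)
        · omega
        · omega
    rw [hM]
    simp only
    rw [hins, Finset.sum_insert (by simp)]
    ring
  have hdomM : ∀ t, M ν t ≤ M μ t := by
    intro t
    rcases le_or_gt n t with ht | ht
    · rw [Mtop μ t ht, Mtop ν t ht, hμ1, hν1]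
    · -- pick threshold a
      obtain ⟨a, key⟩ : ∃ a : ℝ, ∀ s : Fin n, (t ≤ s.val ↔ a < (σ s : ℝ)) := by
        rcases Nat.eq_zero_or_pos t with rfl | htpos
        · refine ⟨(σ ⟨0, ht⟩ : ℝ) - 1, fun s => ?_⟩
          have h1 : (σ ⟨0, ht⟩ : ↥R) ≤ σ s := σ.monotone (Fin.mk_le_mk.mpr (Nat.zero_le _))
          have h2 : ((σ ⟨0, ht⟩ : ↥R) : ℝ) ≤ ((σ s : ↥R) : ℝ) := h1
          constructor
          · intro _; linarith
          · intro _; exact Nat.zero_le _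
        · refine ⟨(σ ⟨t - 1, by omega⟩ : ℝ), fun s => ?_⟩
          constructor
          · intro h
            have : (⟨t - 1, by omega⟩ : Fin n) < s := by
              rw [Fin.lt_def]; simp; omega
            exact σ.strictMono this
          · intro h
            have : (⟨t - 1, by omega⟩ : Fin n) < s := σ.lt_iff_lt.mp (Subtype.coe_lt_coe.mp h)
            rw [Fin.lt_def] at this
            simp at this
            omega
      have tail : ∀ f : ↥R → ℝ,
          ∑ s ∈ Finset.univ.filter (fun s : Fin n => ¬ s.val < t), f (σ s) =
          ∑ v ∈ Finset.univ.filter (fun v : ↥R => a < (v : ℝ)), f v := by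
        intro f
        rw [Finset.sum_filter, Finset.sum_filter]
        refine Fintype.sum_equiv σ.toEquiv _ _ (fun s => ?_)
        have hks := key s
        show (if ¬ (s : ℕ) < t then f (σ s) else 0) = if a < ((σ s : ↥R) : ℝ) then f (σ s) else 0
        by_cases h : t ≤ s.val
        · rw [if_pos (by omega), if_pos (hks.mp h)]
        · rw [if_neg (by omega), if_neg (fun hc => h (hks.mpr hc))]
      have split1 : M μ t + ∑ v ∈ Finset.univ.filter (fun v : ↥R => a < (v : ℝ)), μ v = 1 := by
        rw [← tail μ, hM]
        simp only
        rw [Finset.sum_filter_add_sum_filter_not  Finset.univ (fun s : Fin n => s.val < t)]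
        rw [Msum μ, hμ1]
      have split2 : M ν t + ∑ v ∈ Finset.univ.filter (fun v : ↥R => a < (v : ℝ)), ν v = 1 := by
        rw [← tail ν, hM]
        simp only
        rw [Finset.sum_filter_add_sum_filter_not Finset.univ (fun s : Fin n => s.val < t)]
        rw [Msum ν, hν1]
      have := hdom a
      linarith
  refine ⟨fun b a => max 0 (min (M μ ((σ.symm b).val + 1)) (M ν ((σ.symm a).val + 1)) -
      max (M μ (σ.symm b).val) (M ν (σ.symm a).val)), fun b a => le_max_left _ _, ?_, ?_, ?_⟩
  · -- row sums
    intro b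
    rw [← Equiv.sum_comp σ.toEquiv]
    have hre : ∀ α : Fin n, σ.symm (σ.toEquiv α) = α := fun α => σ.symm_apply_apply α
    calc ∑ α : Fin n, max 0 (min (M μ ((σ.symm b).val + 1)) (M ν ((σ.symm (σ.toEquiv α)).val + 1)) -
          max (M μ (σ.symm b).val) (M ν (σ.symm (σ.toEquiv α)).val))
        = ∑ α : Fin n, max 0 (min (M μ ((σ.symm b).val + 1)) (M ν (α.val + 1)) -
          max (M μ (σ.symm b).val) (M ν α.val)) := by
          refine Finset.sum_congr rfl (fun α _ => ?_); rw [hre α]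
      _ = M μ ((σ.symm b).val + 1) - M μ (σ.symm b).val := by
          apply telescope n _ _ (M ν) (Mmono ν hν0) (M0 ν) (Mtop ν n le_rfl ▸ hν1 ▸ rfl)
          · exact Mmono μ hμ0 (Nat.le_succ _)
          · rw [← M0 μ]; exact Mmono μ hμ0 (Nat.zero_le _)
          · rw [← hμ1, ← Mtop μ n le_rfl]; exact Mmono μ hμ0 (σ.symm b).isLt
      _ = μ b := by rw [Mstep μ (σ.symm b), σ.apply_symm_apply]; ring
  · -- column sums
    intro a
    rw [← Equiv.sum_comp σ.toEquiv]
    have hre : ∀ β : Fin n, σ.symm (σ.toEquiv β) = β := fun β => σ.symm_apply_apply β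
    calc ∑ β : Fin n, max 0 (min (M μ ((σ.symm (σ.toEquiv β)).val + 1)) (M ν ((σ.symm a).val + 1)) -
          max (M μ (σ.symm (σ.toEquiv β)).val) (M ν (σ.symm a).val))
        = ∑ β : Fin n, max 0 (min (M ν ((σ.symm a).val + 1)) (M μ (β.val + 1)) -
          max (M ν (σ.symm a).val) (M μ β.val)) := by
          refine Finset.sum_congr rfl (fun β _ => ?_)
          rw [hre β, min_comm (M μ (β.val + 1)) (M ν ((σ.symm a).val + 1)),
            max_comm (M μ β.val) (M ν (σ.symm a).val)]
      _ = M ν ((σ.symm a).val + 1) - M ν (σ.symm a).val := by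
          apply telescope n _ _ (M μ) (Mmono μ hμ0) (M0 μ) (Mtop μ n le_rfl ▸ hμ1 ▸ rfl)
          · exact Mmono ν hν0 (Nat.le_succ _)
          · rw [← M0 ν]; exact Mmono ν hν0 (Nat.zero_le _)
          · rw [← hν1, ← Mtop ν n le_rfl]; exact Mmono ν hν0 (σ.symm a).isLt
      _ = ν a := by rw [Mstep ν (σ.symm a), σ.apply_symm_apply]; ring
  · -- support
    intro b a hab
    have h1 : σ.symm a < σ.symm b := by
      apply σ.symm.strictMono
      exact Subtype.coe_lt_coe.mp hab
    have h2 : (σ.symm a).val + 1 ≤ (σ.symm b).val := h1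
    have h3 : M ν ((σ.symm a).val + 1) ≤ M μ (σ.symm b).val :=
      (hdomM _).trans (Mmono μ hμ0 h2)
    apply max_eq_left
    have : min (M μ ((σ.symm b).val + 1)) (M ν ((σ.symm a).val + 1)) ≤
        max (M μ (σ.symm b).val) (M ν (σ.symm a).val) :=
      le_trans (min_le_right _ _) (h3.trans (le_max_left _ _))
    linarith

lemma feasible_congr {K : ℕ} {R : Finset ℝ} {p p' : (Fin K → ↥R) → ℝ}
    (h : ∀ r, p r = p' r) {x : Fin K → ℝ} (hx : x ∈ FeasibleSet K R p) :
    x ∈ FeasibleSet K R p' := by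
  obtain ⟨φ, h1, h2, h3⟩ := hx
  exact ⟨φ, h1, h2, fun k => by rw [h3 k]; exact Finset.sum_congr rfl (fun r _ => by rw [h r])⟩

lemma feasible_swap {K : ℕ} {R : Finset ℝ} {p : (Fin K → ↥R) → ℝ} (i j : Fin K)
    {x : Fin K → ℝ} (hx : x ∈ FeasibleSet K R p) :
    (fun m => x (Equiv.swap i j m)) ∈ FeasibleSet K R
      (fun r => p (fun m => r (Equiv.swap i j m))) := by
  obtain ⟨φ, hicc, hsum, hthru⟩ := hx
  have hEinv : Function.Involutive (fun r : Fin K → ↥R => fun m => r (Equiv.swap i j m)) :=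
    fun r => by funext m; simp [Equiv.swap_apply_self]
  set E := hEinv.toPerm _ with hE
  refine ⟨fun k r => φ (Equiv.swap i j k) (fun m => r (Equiv.swap i j m)), ?_, ?_, ?_⟩
  · intro k r; exact hicc _ _
  · intro r
    exact le_of_eq_of_le
      (Equiv.sum_comp (Equiv.swap i j) fun k => φ k fun m => r ((Equiv.swap i j) m)) (hsum _)
  · intro k
    dsimp only
    show x (Equiv.swap i j k) = _
    rw [hthru (Equiv.swap i j k)]
    rw [← Equiv.sum_comp E (fun r => φ (Equiv.swap i j k) r * p r * ((r (Equiv.swap i j k) : ℝ)))]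
    refine Finset.sum_congr rfl (fun r _ => ?_)
    have h1 : (E r) (Equiv.swap i j k) = r k := by
      show r (Equiv.swap i j (Equiv.swap i j k)) = r k
      rw [Equiv.swap_apply_self]
    have h2 : (E r : Fin K → ↥R) = fun m => r (Equiv.swap i j m) := rfl
    rw [h1, h2]

lemma feasible_resample {K : ℕ} {R : Finset ℝ} (j : Fin K) (μ ν : ↥R → ℝ)
    (w : (Fin K → ↥R) → ℝ)
    (hμ0 : ∀ v, 0 ≤ μ v) (hμ1 : ∑ v, μ v = 1) (hν1 : ∑ v, ν v = 1)
    (hw : ∀ r b, w (Function.update r j b) = w r)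
    {x : Fin K → ℝ} (hx : x ∈ FeasibleSet K R (fun r => μ (r j) * w r)) (hxj : x j = 0) :
    x ∈ FeasibleSet K R (fun r => ν (r j) * w r) := by
  classical
  obtain ⟨φ, hicc, hsum, hthru⟩ := hx
  have hφ0 : ∀ k r, 0 ≤ φ k r := fun k r => (hicc k r).1
  have hφ1 : ∀ k r, φ k r ≤ 1 := fun k r => (hicc k r).2
  refine ⟨fun k r => if k = j then 0 else ∑ b, μ b * φ k (Function.update r j b), ?_, ?_, ?_⟩
  · intro k r
    dsimp only
    constructor
    · split
      · exact le_refl _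
      · exact Finset.sum_nonneg fun b _ => mul_nonneg (hμ0 b) (hφ0 _ _)
    · split
      · exact zero_le_one
      · calc ∑ b, μ b * φ k (Function.update r j b) ≤ ∑ b, μ b * 1 :=
              Finset.sum_le_sum fun b _ => mul_le_mul_of_nonneg_left (hφ1 _ _) (hμ0 b)
          _ = 1 := by simp only [mul_one]; exact hμ1
  · intro r
    dsimp only
    calc ∑ k, (if k = j then 0 else ∑ b, μ b * φ k (Function.update r j b))
        ≤ ∑ k, ∑ b, μ b * φ k (Function.update r j b) := by
          refine Finset.sum_le_sum fun k _ => ?_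
          split
          · exact Finset.sum_nonneg fun b _ => mul_nonneg (hμ0 b) (hφ0 _ _)
          · exact le_refl _
      _ = ∑ b, μ b * ∑ k, φ k (Function.update r j b) := by
          rw [Finset.sum_comm]
          exact Finset.sum_congr rfl fun b _ => by rw [Finset.mul_sum]
      _ ≤ ∑ b, μ b * 1 := Finset.sum_le_sum fun b _ =>
          mul_le_mul_of_nonneg_left (hsum _) (hμ0 b)
      _ = 1 := by simp only [mul_one]; exact hμ1
  · intro k
    dsimp only
    by_cases hk : k = j
    · subst hk
      simp [hxj]
    · simp only [if_neg hk]
      have hthk : x k = ∑ r, φ k r * (μ (r j) * w r) * ((r k : ℝ)) := by simpa using hthru k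
      have hee : Function.Involutive (fun z : (Fin K → ↥R) × ↥R =>
          ((Function.update z.1 j z.2, z.1 j) : (Fin K → ↥R) × ↥R)) := by
        rintro ⟨r, b⟩
        simp [Function.update_idem]
      set e := hee.toPerm _ with he
      symm
      calc ∑ r, (∑ b, μ b * φ k (Function.update r j b)) * (ν (r j) * w r) * ((r k : ℝ))
          = ∑ r, ∑ b, μ b * φ k (Function.update r j b) * (ν (r j) * w r) * ((r k : ℝ)) := by
            refine Finset.sum_congr rfl fun r _ => ?_
            rw [Finset.sum_mul, Finset.sum_mul]
        _ = ∑ z : (Fin K → ↥R) × ↥R,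
              μ z.2 * φ k (Function.update z.1 j z.2) * (ν (z.1 j) * w z.1) * ((z.1 k : ℝ)) :=
            (Fintype.sum_prod_type (f := fun z : (Fin K → ↥R) × ↥R =>
              μ z.2 * φ k (Function.update z.1 j z.2) * (ν (z.1 j) * w z.1) * ((z.1 k : ℝ)))).symm
        _ = ∑ z : (Fin K → ↥R) × ↥R,
              μ ((e z).2) * φ k (Function.update (e z).1 j (e z).2) * (ν ((e z).1 j) * w (e z).1) *
                (((e z).1 k : ℝ)) := (Equiv.sum_comp e _).symm
        _ = ∑ z : (Fin K → ↥R) × ↥R, φ k z.1 * (μ (z.1 j) * w z.1) * ((z.1 k : ℝ)) * ν z.2 := by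
            refine Finset.sum_congr rfl fun z _ => ?_
            have h1 : (e z).1 = Function.update z.1 j z.2 := rfl
            have h2 : (e z).2 = z.1 j := rfl
            rw [h1, h2, Function.update_idem, Function.update_eq_self, Function.update_self,
              Function.update_of_ne hk, hw]
            ring
        _ = ∑ r : Fin K → ↥R, ∑ b : ↥R, φ k r * (μ (r j) * w r) * ((r k : ℝ)) * ν b :=
            Fintype.sum_prod_type (f := fun z : (Fin K → ↥R) × ↥R =>
              φ k z.1 * (μ (z.1 j) * w z.1) * ((z.1 k : ℝ)) * ν z.2)
        _ = ∑ r, φ k r * (μ (r j) * w r) * ((r k : ℝ)) := by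
            refine Finset.sum_congr rfl fun r _ => ?_
            rw [← Finset.mul_sum, hν1, mul_one]
        _ = x k := hthk.symm

lemma feasible_improve {K : ℕ} {R : Finset ℝ} (hRnn : ∀ r ∈ R, 0 ≤ r) (i : Fin K)
    (μ ν : ↥R → ℝ) (w : (Fin K → ↥R) → ℝ)
    (hμ0 : ∀ v, 0 ≤ μ v) (hν0 : ∀ v, 0 ≤ ν v)
    (hμ1 : ∑ v, μ v = 1) (hν1 : ∑ v, ν v = 1)
    (hdom : ∀ a : ℝ, ∑ v ∈ Finset.univ.filter (fun v : ↥R => a < (v : ℝ)), μ v ≤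
      ∑ v ∈ Finset.univ.filter (fun v : ↥R => a < (v : ℝ)), ν v)
    (hw : ∀ r b, w (Function.update r i b) = w r)
    {x : Fin K → ℝ} (hx : x ∈ FeasibleSet K R (fun r => μ (r i) * w r)) :
    x ∈ FeasibleSet K R (fun r => ν (r i) * w r) := by
  classical
  obtain ⟨φ, hicc, hsum, hthru⟩ := hx
  have hφ0 : ∀ k r, 0 ≤ φ k r := fun k r => (hicc k r).1
  obtain ⟨π, hπ0, hπrow, hπcol, hπsupp⟩ := exists_coupling R μ ν hμ0 hν0 hμ1 hν1 hdom
  have hνz : ∀ a : ↥R, ν a = 0 → ∀ b, π b a = 0 := by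
    intro a ha b
    have h := (Finset.sum_eq_zero_iff_of_nonneg (fun b _ => hπ0 b a)).mp (by rw [hπcol a, ha])
    exact h b (Finset.mem_univ b)
  set c : ↥R → ↥R → Fin K → ℝ := fun b a k => if k = i then (b : ℝ) / (a : ℝ) else 1 with hc
  have hc0 : ∀ b a k, 0 ≤ c b a k := by
    intro b a k; rw [hc]; dsimp only; split
    · exact div_nonneg (hRnn _ b.2) (hRnn _ a.2)
    · exact zero_le_one
  have hc1 : ∀ (b a : ↥R) (k : Fin K), (b : ℝ) ≤ (a : ℝ) → c b a k ≤ 1 := by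
    intro b a k hba; rw [hc]; dsimp only; split
    · exact div_le_one_of_le₀ hba (hRnn _ a.2)
    · exact le_refl 1
  set ψ : Fin K → (Fin K → ↥R) → ℝ := fun k r =>
    (∑ b, π b (r i) * (φ k (Function.update r i b) * c b (r i) k)) / ν (r i) with hψ
  have hkey : ∀ r : Fin K → ↥R,
      ∑ k, ∑ b : ↥R, π b (r i) * (φ k (Function.update r i b) * c b (r i) k) ≤ ν (r i) := by
    intro r
    rw [Finset.sum_comm]
    calc ∑ b : ↥R, ∑ k, π b (r i) * (φ k (Function.update r i b) * c b (r i) k)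
        ≤ ∑ b : ↥R, π b (r i) := by
          refine Finset.sum_le_sum fun b _ => ?_
          rcases le_or_gt ((b : ℝ)) ((r i : ℝ)) with hba | hba
          · calc ∑ k, π b (r i) * (φ k (Function.update r i b) * c b (r i) k)
                ≤ ∑ k, π b (r i) * φ k (Function.update r i b) :=
                  Finset.sum_le_sum fun k _ => mul_le_mul_of_nonneg_left
                    (mul_le_of_le_one_right (hφ0 _ _) (hc1 b (r i) k hba)) (hπ0 _ _)
              _ = π b (r i) * ∑ k, φ k (Function.update r i b) := (Finset.mul_sum _ _ _).symm
              _ ≤ π b (r i) * 1 := mul_le_mul_of_nonneg_left (hsum _) (hπ0 _ _)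
              _ = π b (r i) := mul_one _
          · have hz : π b (r i) = 0 := hπsupp b (r i) hba
            simp [hz]
      _ = ν (r i) := hπcol (r i)
  have hψ0 : ∀ k r, 0 ≤ ψ k r := fun k r => div_nonneg (Finset.sum_nonneg fun b _ =>
      mul_nonneg (hπ0 _ _) (mul_nonneg (hφ0 _ _) (hc0 _ _ _))) (hν0 _)
  have hψsum : ∀ r, ∑ k, ψ k r ≤ 1 := by
    intro r
    rw [hψ]; dsimp only
    rw [← Finset.sum_div]
    exact div_le_one_of_le₀ (hkey r) (hν0 _)
  refine ⟨ψ, fun k r => ⟨hψ0 k r, ?_⟩, hψsum, ?_⟩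
  · calc ψ k r ≤ ∑ k', ψ k' r := Finset.single_le_sum (fun k' _ => hψ0 k' r) (Finset.mem_univ k)
      _ ≤ 1 := hψsum r
  · intro k
    dsimp only
    have hthk : x k = ∑ r, φ k r * (μ (r i) * w r) * ((r k : ℝ)) := by simpa using hthru k
    have hdm : ∀ r : Fin K → ↥R, ψ k r * (ν (r i) * w r) * ((r k : ℝ)) =
        ∑ b : ↥R, π b (r i) * (φ k (Function.update r i b) * c b (r i) k) * w r * ((r k : ℝ)) := by
      intro r
      rw [hψ]; dsimp only
      rcases eq_or_ne (ν (r i)) 0 with hz | hz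
      · have hterm : ∀ b : ↥R,
            π b (r i) * (φ k (Function.update r i b) * c b (r i) k) = 0 := fun b => by
          rw [hνz _ hz b]; ring
        rw [Finset.sum_eq_zero fun b _ => hterm b, Finset.sum_eq_zero fun b _ => by
          rw [hterm b]; ring]
        simp
      · have h1 : (∑ b : ↥R, π b (r i) * (φ k (Function.update r i b) * c b (r i) k)) / ν (r i) *
            (ν (r i) * w r) * ((r k : ℝ)) =
            (∑ b : ↥R, π b (r i) * (φ k (Function.update r i b) * c b (r i) k)) / ν (r i) *
            ν (r i) * w r * ((r k : ℝ)) := by ring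
        rw [h1, div_mul_cancel₀ _ hz, Finset.sum_mul, Finset.sum_mul]
    have hterm2 : ∀ (r : Fin K → ↥R) (b : ↥R),
        π b (r i) * (φ k (Function.update r i b) * c b (r i) k) * w r * ((r k : ℝ)) =
        π b (r i) * (φ k (Function.update r i b) * w (Function.update r i b) *
          ((Function.update r i b k : ℝ))) := by
      intro r b
      by_cases hki : k = i
      · subst hki
        rw [hc]; dsimp only; rw [if_pos rfl, Function.update_self, hw]
        rcases eq_or_ne ((r k : ℝ)) 0 with ha | ha
        · rw [ha]
          rcases eq_or_ne (π b (r k)) 0 with hp | hp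
          · rw [hp]; ring
          · have hble : ¬ ((r k : ℝ) < (b : ℝ)) := fun hlt => hp (hπsupp b (r k) hlt)
            have hb0 : (b : ℝ) = 0 := le_antisymm (by rw [← ha]; exact not_lt.mp hble) (hRnn _ b.2)
            rw [hb0]; ring
        · field_simp
      · rw [hc]; dsimp only; rw [if_neg hki, Function.update_of_ne hki, hw]
        ring
    have hee : Function.Involutive (fun z : (Fin K → ↥R) × ↥R =>
        ((Function.update z.1 i z.2, z.1 i) : (Fin K → ↥R) × ↥R)) := by
      rintro ⟨r, b⟩
      simp [Function.update_idem]
    set e := hee.toPerm _ with he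
    calc x k = ∑ r, φ k r * (μ (r i) * w r) * ((r k : ℝ)) := hthk
      _ = ∑ r : Fin K → ↥R, (∑ b : ↥R, π (r i) b) * (φ k r * w r * ((r k : ℝ))) := by
          refine Finset.sum_congr rfl fun r _ => ?_
          rw [hπrow (r i)]; ring
      _ = ∑ r : Fin K → ↥R, ∑ b : ↥R, π (r i) b * (φ k r * w r * ((r k : ℝ))) := by
          refine Finset.sum_congr rfl fun r _ => ?_
          rw [Finset.sum_mul]
      _ = ∑ z : (Fin K → ↥R) × ↥R, π (z.1 i) z.2 * (φ k z.1 * w z.1 * ((z.1 k : ℝ))) :=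
          (Fintype.sum_prod_type (f := fun z : (Fin K → ↥R) × ↥R =>
            π (z.1 i) z.2 * (φ k z.1 * w z.1 * ((z.1 k : ℝ))))).symm
      _ = ∑ z : (Fin K → ↥R) × ↥R, π ((e z).1 i) (e z).2 *
            (φ k (e z).1 * w (e z).1 * (((e z).1 k : ℝ))) := (Equiv.sum_comp e _).symm
      _ = ∑ z : (Fin K → ↥R) × ↥R, π z.2 (z.1 i) * (φ k (Function.update z.1 i z.2) *
            w (Function.update z.1 i z.2) * ((Function.update z.1 i z.2 k : ℝ))) := by
          refine Finset.sum_congr rfl fun z _ => ?_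
          have h1 : (e z).1 = Function.update z.1 i z.2 := rfl
          have h2 : (e z).2 = z.1 i := rfl
          rw [h1, h2, Function.update_self]
      _ = ∑ r : Fin K → ↥R, ∑ b : ↥R, π b (r i) * (φ k (Function.update r i b) *
            w (Function.update r i b) * ((Function.update r i b k : ℝ))) :=
          Fintype.sum_prod_type (f := fun z : (Fin K → ↥R) × ↥R =>
            π z.2 (z.1 i) * (φ k (Function.update z.1 i z.2) *
            w (Function.update z.1 i z.2) * ((Function.update z.1 i z.2 k : ℝ))))
      _ = ∑ r : Fin K → ↥R, ∑ b : ↥R,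
            π b (r i) * (φ k (Function.update r i b) * c b (r i) k) * w r * ((r k : ℝ)) := by
          refine Finset.sum_congr rfl fun r _ => Finset.sum_congr rfl fun b _ => ?_
          rw [hterm2 r b]
      _ = ∑ r, ψ k r * (ν (r i) * w r) * ((r k : ℝ)) := by
          refine Finset.sum_congr rfl fun r _ => (hdm r).symm


theorem stmt6 (K : ℕ) (hK : 1 ≤ K) (R : Finset ℝ) (hRne : R.Nonempty)
    (hRnn : ∀ r ∈ R, 0 ≤ r)
    (q : Fin K → ↥R → ℝ) (hqnn : ∀ k v, 0 ≤ q k v) (hq1 : ∀ k, ∑ v, q k v = 1)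
    (p : (Fin K → ↥R) → ℝ) (hindep : ∀ r, p r = ∏ k, q k (r k))
    (i j : Fin K)
    (hdom : ∀ a : ℝ, ∑ v ∈ Finset.univ.filter (fun v : ↥R => a < (v : ℝ)), q j v ≤
      ∑ v ∈ Finset.univ.filter (fun v : ↥R => a < (v : ℝ)), q i v)
    (x : Fin K → ℝ) (hx : x ∈ FeasibleSet K R p) (hxi : x i = 0) :
    (fun m => x (Equiv.swap i j m)) ∈ FeasibleSet K R p := by
  classical
  rcases eq_or_ne i j with rfl | hij
  · simpa [Equiv.swap_self] using hx
  · have hiej : i ∈ Finset.univ.erase j := Finset.mem_erase.mpr ⟨hij, Finset.mem_univ i⟩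
    have hjei : j ∈ Finset.univ.erase i := Finset.mem_erase.mpr ⟨Ne.symm hij, Finset.mem_univ j⟩
    -- Step A: relabel users by the swap
    have hA : (fun m => x (Equiv.swap i j m)) ∈ FeasibleSet K R
        (fun r => p (fun m => r (Equiv.swap i j m))) := feasible_swap i j hx
    -- p at swapped state is the product of swapped marginals
    have hps : ∀ r : Fin K → ↥R,
        p (fun m => r (Equiv.swap i j m)) = ∏ k, q (Equiv.swap i j k) (r k) := by
      intro r
      rw [hindep]
      refine (Fintype.prod_equiv (Equiv.swap i j) (fun k => q (Equiv.swap i j k) (r k))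
        (fun k => q k (r (Equiv.swap i j k))) (fun k => ?_)).symm
      rw [Equiv.swap_apply_self]
    have hA' : (fun m => x (Equiv.swap i j m)) ∈ FeasibleSet K R
        (fun r => q i (r j) * ∏ k ∈ Finset.univ.erase j, q (Equiv.swap i j k) (r k)) := by
      refine feasible_congr (fun r => ?_) hA
      rw [hps r,
        ← Finset.mul_prod_erase Finset.univ (fun k => q (Equiv.swap i j k) (r k))
          (Finset.mem_univ j), Equiv.swap_apply_right]
    -- Step B: resample coordinate j (unused by the new vector) from q i to q j
    have hwBupd : ∀ (r : Fin K → ↥R) (b : ↥R),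
        (∏ k ∈ Finset.univ.erase j, q (Equiv.swap i j k) (Function.update r j b k)) =
        ∏ k ∈ Finset.univ.erase j, q (Equiv.swap i j k) (r k) :=
      fun r b => Finset.prod_congr rfl fun k hk => by
        rw [Function.update_of_ne (Finset.ne_of_mem_erase hk)]
    have hxj0 : (fun m => x (Equiv.swap i j m)) j = 0 := by
      show x (Equiv.swap i j j) = 0
      rw [Equiv.swap_apply_right]
      exact hxi
    have hB : (fun m => x (Equiv.swap i j m)) ∈ FeasibleSet K R
        (fun r => q j (r j) * ∏ k ∈ Finset.univ.erase j, q (Equiv.swap i j k) (r k)) :=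
      feasible_resample j (q i) (q j)
        (fun r => ∏ k ∈ Finset.univ.erase j, q (Equiv.swap i j k) (r k))
        (hqnn i) (hq1 i) (hq1 j) hwBupd hA' hxj0
    -- rewrite into the form needed for Step C
    have hB' : (fun m => x (Equiv.swap i j m)) ∈ FeasibleSet K R
        (fun r => q j (r i) * (q j (r j) *
          ∏ k ∈ (Finset.univ.erase j).erase i, q (Equiv.swap i j k) (r k))) := by
      refine feasible_congr (fun r => ?_) hB
      rw [← Finset.mul_prod_erase (Finset.univ.erase j)
        (fun k => q (Equiv.swap i j k) (r k)) hiej, Equiv.swap_apply_left]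
      ring
    -- Step C: improve coordinate i from q j to q i using stochastic dominance
    have hwCupd : ∀ (r : Fin K → ↥R) (b : ↥R),
        (q j (Function.update r i b j) * ∏ k ∈ (Finset.univ.erase j).erase i,
          q (Equiv.swap i j k) (Function.update r i b k)) =
        q j (r j) * ∏ k ∈ (Finset.univ.erase j).erase i, q (Equiv.swap i j k) (r k) := by
      intro r b
      rw [Function.update_of_ne (Ne.symm hij)]
      congr 1
      exact Finset.prod_congr rfl fun k hk => by
        rw [Function.update_of_ne (Finset.ne_of_mem_erase hk)]
    have hC : (fun m => x (Equiv.swap i j m)) ∈ FeasibleSet K R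
        (fun r => q i (r i) * (q j (r j) *
          ∏ k ∈ (Finset.univ.erase j).erase i, q (Equiv.swap i j k) (r k))) :=
      feasible_improve hRnn i (q j) (q i)
        (fun r => q j (r j) * ∏ k ∈ (Finset.univ.erase j).erase i, q (Equiv.swap i j k) (r k))
        (hqnn j) (hqnn i) (hq1 j) (hq1 i) hdom hwCupd hB'
    -- finally, the resulting weight is exactly p
    refine feasible_congr (fun r => ?_) hC
    have h3 : ∏ k ∈ (Finset.univ.erase j).erase i, q (Equiv.swap i j k) (r k) =
        ∏ k ∈ (Finset.univ.erase i).erase j, q k (r k) := by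
      rw [Finset.erase_right_comm]
      refine Finset.prod_congr rfl fun k hk => ?_
      have hkj : k ≠ j := Finset.ne_of_mem_erase hk
      have hki : k ≠ i := Finset.ne_of_mem_erase (Finset.mem_of_mem_erase hk)
      rw [Equiv.swap_apply_of_ne_of_ne hki hkj]
    rw [hindep,
      ← Finset.mul_prod_erase Finset.univ (fun k => q k (r k)) (Finset.mem_univ i),
      ← Finset.mul_prod_erase (Finset.univ.erase i) (fun k => q k (r k)) hjei, h3]
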